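/- A finite simple graph G is locatable in ℤ² if and only if G is 4-colorable. -/

import Mathlib

open SimpleGraph

/-- Cast an integer grid point to a real point. -/
def castPt {d : ℕ} (p : Fin d → ℤ) : Fin d → ℝ := fun i => (p i : ℝ)

/-- The grid points lying on the closed segment in `ℝ^d` joining `a` and `b`. -/
def segGridPts {d : ℕ} (a b : Fin d → ℤ) : Set (Fin d → ℤ) :=
  {p | castPt p ∈ segment ℝ (castPt a) (castPt b)}

/-- `φ` is a grid drawing of `G` in `ℤ^d`: it is injective and no vertex image other than the
endpoints lies on the closed segment representing an edge. -/
def IsGridDrawing {V : Type*} {d : ℕ} (G : SimpleGraph V) (φ : V → Fin d → ℤ) : Prop :=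
  Function.Injective φ ∧
    ∀ u v w : V, G.Adj u v →
      castPt (φ w) ∈ segment ℝ (castPt (φ u)) (castPt (φ v)) → w = u ∨ w = v

/-- `G` is `q`-locatable in `ℤ^d`: it has a grid drawing in which every edge segment contains
at most `q` grid points. -/
def IsQLocatable {V : Type*} (G : SimpleGraph V) (d q : ℕ) : Prop :=
  ∃ φ : V → Fin d → ℤ, IsGridDrawing G φ ∧
    ∀ u v : V, G.Adj u v → (segGridPts (φ u) (φ v)).ncard ≤ q

/-- A primitive grid drawing: every edge segment contains exactly its two endpoints
as grid points. -/
def IsPrimitiveDrawing {V : Type*} {d : ℕ} (G : SimpleGraph V) (φ : V → Fin d → ℤ) : Prop :=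
  IsGridDrawing G φ ∧ ∀ u v : V, G.Adj u v → segGridPts (φ u) (φ v) = {φ u, φ v}

/-- `G` is locatable in `ℤ^d`: it has a primitive grid drawing in `ℤ^d`. -/
def IsLocatable {V : Type*} (G : SimpleGraph V) (d : ℕ) : Prop :=
  ∃ φ : V → Fin d → ℤ, IsPrimitiveDrawing G φ

/-- The rank of a grid point in `ℤ^d`: the tuple of its first `d - 1` coordinates. -/
def rank {d : ℕ} (p : Fin d → ℤ) : Fin (d - 1) → ℤ :=
  fun i => p (Fin.castLE (Nat.sub_le d 1) i)

/-- `G` is embeddable on `l` columns: it has a grid drawing in `ℤ²` in which the first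
coordinates of the vertex images take at most `l` distinct values. -/
def EmbeddableOnCols {V : Type*} (G : SimpleGraph V) (l : ℕ) : Prop :=
  ∃ φ : V → Fin 2 → ℤ, IsGridDrawing G φ ∧ (Set.range fun v => φ v 0).ncard ≤ l

/-- `G` can be located on `l` columns in `ℤ^d`: it has a primitive grid drawing in `ℤ^d`
using at most `l` columns. -/
def LocatableOnCols {V : Type*} (G : SimpleGraph V) (d l : ℕ) : Prop :=
  ∃ φ : V → Fin d → ℤ, IsPrimitiveDrawing G φ ∧ (Set.range fun v => rank (φ v)).ncard ≤ l

/-- A linear forest: an acyclic graph with maximum degree at most two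
(i.e. a disjoint union of paths). -/
def IsLinearForest {W : Type*} (H : SimpleGraph W) : Prop :=
  H.IsAcyclic ∧ ∀ v : W, {w | H.Adj v w}.ncard ≤ 2


lemma segGridPts_eq_pair {a b : Fin 2 → ℤ}
    (h : IsCoprime (b 0 - a 0) (b 1 - a 1)) : segGridPts a b = {a, b} := by
  obtain ⟨u, v, huv⟩ := h
  ext p
  constructor
  · intro hp
    rw [segGridPts, Set.mem_setOf_eq, segment_eq_image'] at hp
    obtain ⟨θ, hθ, hpe⟩ := hp
    have hc : ∀ i, (p i : ℝ) = (a i : ℝ) + θ * ((b i : ℝ) - a i) := by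
      intro i
      have := congrFun hpe i
      simpa [castPt, smul_eq_mul] using this.symm
    have h0 := hc 0
    have h1 := hc 1
    set m : ℤ := u * (p 0 - a 0) + v * (p 1 - a 1) with hm
    have hbez : (u : ℝ) * ((b 0 : ℝ) - a 0) + (v : ℝ) * ((b 1 : ℝ) - a 1) = 1 := by
      exact_mod_cast congrArg (fun z : ℤ => (z : ℝ)) huv
    have hθm : θ = (m : ℝ) := by
      push_cast [hm]
      linear_combination (-θ) * hbez - (u : ℝ) * h0 - (v : ℝ) * h1
    have hm01 : m = 0 ∨ m = 1 := by
      have ha : (0 : ℝ) ≤ (m : ℝ) := hθm ▸ hθ.1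
      have hb : (m : ℝ) ≤ 1 := hθm ▸ hθ.2
      have ha' : (0 : ℤ) ≤ m := by exact_mod_cast ha
      have hb' : m ≤ 1 := by exact_mod_cast hb
      omega
    rcases hm01 with he | he
    · left
      funext i
      have hci := hc i
      rw [hθm, he] at hci
      push_cast at hci
      exact_mod_cast (by linarith : ((p i : ℝ)) = (a i : ℝ))
    · right
      funext i
      have hci := hc i
      rw [hθm, he] at hci
      push_cast at hci
      exact_mod_cast (by linarith : ((p i : ℝ)) = (b i : ℝ))
  · intro hp
    rcases hp with rfl | hp
    · exact left_mem_segment ℝ _ _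
    · rw [Set.mem_singleton_iff] at hp
      subst hp
      exact right_mem_segment ℝ _ _

/-- Column of a color class. -/
def xcol : Fin 4 → ℤ := fun c => (c.val : ℤ)

/-- Row residue of a color class. -/
def rrow : Fin 4 → ℤ := ![0, 1, 3, 2]

lemma key_coprime (c c' : Fin 4) (h : c ≠ c') (k : ℤ) :
    IsCoprime (xcol c' - xcol c) (6 * k + (rrow c' - rrow c)) := by
  fin_cases c <;> fin_cases c' <;>
    simp only [xcol, rrow] <;> norm_num <;>
  first
    | exact absurd rfl h
    | (refine ⟨1, 0, ?_⟩; ring1)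
    | (refine ⟨-1, 0, ?_⟩; ring1)
    | (refine ⟨-3 * k - 1, 1, ?_⟩; ring1)
    | (refine ⟨-3 * k, 1, ?_⟩; ring1)
    | (refine ⟨2 * k + 1, -1, ?_⟩; ring1)
    | (refine ⟨3 * k - 2, 1, ?_⟩; ring1)
    | (refine ⟨2 * k - 1, 1, ?_⟩; ring1)
    | (refine ⟨3 * k - 1, 1, ?_⟩; ring1)
    | exact ⟨3 * k + 1, by ring⟩

lemma rrow_bounds (c : Fin 4) : 0 ≤ rrow c ∧ rrow c ≤ 3 := by
  fin_cases c <;> simp [rrow]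

theorem locatable_iff_four_colorable {V : Type*} [Fintype V] (G : SimpleGraph V) :
    IsLocatable G 2 ↔ G.Colorable 4 := by
  constructor
  · rintro ⟨φ, ⟨hinj, -⟩, hprim⟩
    refine ⟨SimpleGraph.Coloring.mk
      (fun v => (⟨(φ v 0).natAbs % 2 + 2 * ((φ v 1).natAbs % 2), by omega⟩ : Fin 4)) ?_⟩
    intro u v hadj heq
    simp only [Fin.mk.injEq] at heq
    have hdvd : (2 : ℤ) ∣ φ u 0 + φ v 0 ∧ (2 : ℤ) ∣ φ u 1 + φ v 1 := by
      constructor <;> omega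
    set m : Fin 2 → ℤ := fun i => (φ u i + φ v i) / 2 with hmdef
    have hm : ∀ i : Fin 2, 2 * m i = φ u i + φ v i := by
      intro i
      fin_cases i
      · exact Int.mul_ediv_cancel' hdvd.1
      · exact Int.mul_ediv_cancel' hdvd.2
    have hmem : m ∈ segGridPts (φ u) (φ v) := by
      show castPt m ∈ segment ℝ (castPt (φ u)) (castPt (φ v))
      refine ⟨1/2, 1/2, by norm_num, by norm_num, by norm_num, ?_⟩
      funext i
      have h2 : ((2 : ℤ) : ℝ) * (m i : ℝ) = ((φ u i : ℤ) : ℝ) + ((φ v i : ℤ) : ℝ) := by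
        exact_mod_cast congrArg (fun z : ℤ => (z : ℝ)) (hm i)
      simp only [castPt, Pi.add_apply, Pi.smul_apply, smul_eq_mul]
      push_cast at h2 ⊢
      linarith
    rw [hprim u v hadj] at hmem
    have hne : φ u ≠ φ v := fun h => (hadj.ne) (hinj h)
    rcases hmem with h | h
    · apply hne
      funext i
      have h2 := hm i
      rw [h] at h2
      omega
    · rw [Set.mem_singleton_iff] at h
      apply hne
      funext i
      have h2 := hm i
      rw [h] at h2
      omega
  · rintro ⟨C⟩
    let e := Fintype.equivFin V
    set φ : V → Fin 2 → ℤ := fun v => ![xcol (C v), 6 * ((e v : ℕ) : ℤ) + rrow (C v)] with hφ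
    have hφ0 : ∀ v, φ v 0 = xcol (C v) := fun v => rfl
    have hφ1 : ∀ v, φ v 1 = 6 * ((e v : ℕ) : ℤ) + rrow (C v) := fun v => rfl
    have hinj : Function.Injective φ := by
      intro u v h
      have h1 : (6 : ℤ) * ((e u : ℕ) : ℤ) + rrow (C u) = 6 * ((e v : ℕ) : ℤ) + rrow (C v) := by
        rw [← hφ1, ← hφ1, h]
      obtain ⟨hu1, hu2⟩ := rrow_bounds (C u)
      obtain ⟨hv1, hv2⟩ := rrow_bounds (C v)
      have : ((e u : ℕ) : ℤ) = ((e v : ℕ) : ℤ) := by omega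
      have : (e u : ℕ) = (e v : ℕ) := by exact_mod_cast this
      exact e.injective (Fin.ext this)
    have hcop : ∀ u v : V, G.Adj u v → IsCoprime (φ v 0 - φ u 0) (φ v 1 - φ u 1) := by
      intro u v h
      rw [hφ0, hφ0, hφ1, hφ1]
      have heq : 6 * ((e v : ℕ) : ℤ) + rrow (C v) - (6 * ((e u : ℕ) : ℤ) + rrow (C u))
          = 6 * (((e v : ℕ) : ℤ) - ((e u : ℕ) : ℤ)) + (rrow (C v) - rrow (C u)) := by ring
      rw [heq]
      exact key_coprime (C u) (C v) (C.valid h) _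
    have hseg : ∀ u v : V, G.Adj u v → segGridPts (φ u) (φ v) = {φ u, φ v} :=
      fun u v h => segGridPts_eq_pair (hcop u v h)
    refine ⟨φ, ⟨hinj, ?_⟩, hseg⟩
    intro u v w hadj hw
    have hmem : φ w ∈ segGridPts (φ u) (φ v) := hw
    rw [hseg u v hadj] at hmem
    rcases hmem with h | h
    · exact Or.inl (hinj h)
    · exact Or.inr (hinj (Set.mem_singleton_iff.mp h))
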